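/- For every real u ≥ 0 and ε ∈ (-1,-1/2), defining f_ε(u) = (1/Γ(ε+1)) ∫₀^∞ x^{ε-1} e^{-x} ln(xu+1) dx, one has for every integer j ≥ 1 (with r = 0): f_{ε+j}(u) = [binom(ε+j, j)]^{-1} ∑_{i=0}^{j} binom(ε+j-1, j-i) (u^i/i!) f_ε^{(i)}(u). -/

import Mathlib

open MeasureTheory Real

/-- Generalized binomial coefficient `x(x-1)⋯(x-n+1)/n!` for real `x`. -/
noncomputable def rbinom (x : ℝ) (n : ℕ) : ℝ :=
  (∏ k ∈ Finset.range n, (x - k)) / (Nat.factorial n : ℝ)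

/-- `f_e(u) = (1/Γ(e+1)) ∫₀^∞ x^{e-1} e^{-x} ln(xu+1) dx`. -/
noncomputable def f (e : ℝ) (u : ℝ) : ℝ :=
  (1 / Real.Gamma (e + 1)) *
    ∫ x in Set.Ioi (0:ℝ), x ^ (e - 1) * Real.exp (-x) * Real.log (x * u + 1)

open Set Filter Topology Finset


noncomputable def G (e u : ℝ) : ℝ :=
  ∫ x in Set.Ioi (0:ℝ), x ^ (e - 1) * Real.exp (-x) * Real.log (x * u + 1)

noncomputable def J (a : ℝ) (i : ℕ) (u : ℝ) : ℝ :=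
  ∫ x in Set.Ioi (0:ℝ), x ^ (a - 1) * Real.exp (-x) / (x * u + 1) ^ i

lemma contOn_rpow (e : ℝ) : ContinuousOn (fun x : ℝ => x ^ e) (Set.Ioi 0) :=
  fun x hx => (Real.continuousAt_rpow_const x e (Or.inl (ne_of_gt hx))).continuousWithinAt

lemma meas_aux1 (e u : ℝ) :
    AEStronglyMeasurable (fun x : ℝ => x ^ (e - 1) * Real.exp (-x) * Real.log (x * u + 1))
      (volume.restrict (Set.Ioi 0)) := by
  have h1 : AEStronglyMeasurable (fun x : ℝ => x ^ (e - 1)) (volume.restrict (Set.Ioi 0)) :=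
    (contOn_rpow (e - 1)).aestronglyMeasurable measurableSet_Ioi
  have h2 : Measurable (fun x : ℝ => Real.exp (-x) * Real.log (x * u + 1)) := by
    have hm : Measurable (fun x : ℝ => x * u + 1) := (measurable_id.mul_const u).add_const 1
    exact ((Real.continuous_exp.comp continuous_neg).measurable).mul (Real.measurable_log.comp hm)
  refine (h1.mul h2.aestronglyMeasurable).congr (Filter.Eventually.of_forall fun x => ?_)
  simp only [Pi.mul_apply]; ring

lemma meas_aux2 (a u : ℝ) (i : ℕ) :
    AEStronglyMeasurable (fun x : ℝ => x ^ (a - 1) * Real.exp (-x) / (x * u + 1) ^ i)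
      (volume.restrict (Set.Ioi 0)) := by
  have h1 : AEStronglyMeasurable (fun x : ℝ => x ^ (a - 1)) (volume.restrict (Set.Ioi 0)) :=
    (contOn_rpow (a - 1)).aestronglyMeasurable measurableSet_Ioi
  have h2 : Measurable (fun x : ℝ => Real.exp (-x) / (x * u + 1) ^ i) := by
    have hm : Measurable (fun x : ℝ => x * u + 1) := (measurable_id.mul_const u).add_const 1
    exact ((Real.continuous_exp.comp continuous_neg).measurable).div (hm.pow_const i)
  refine (h1.mul h2.aestronglyMeasurable).congr (Filter.Eventually.of_forall fun x => ?_)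
  simp only [Pi.mul_apply]; ring

lemma integrableOn_J {a : ℝ} (ha : 0 < a) {u : ℝ} (hu : 0 ≤ u) (i : ℕ) :
    IntegrableOn (fun x : ℝ => x ^ (a - 1) * Real.exp (-x) / (x * u + 1) ^ i) (Set.Ioi 0) := by
  refine Integrable.mono (Real.GammaIntegral_convergent ha) (meas_aux2 a u i) ?_
  rw [ae_restrict_iff' measurableSet_Ioi]
  refine ae_of_all _ fun x hx => ?_
  have hx0 : (0:ℝ) < x := hx
  have h1 : (1:ℝ) ≤ x * u + 1 := by nlinarith
  have hp : (1:ℝ) ≤ (x * u + 1) ^ i := one_le_pow₀ h1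
  have hnum : 0 ≤ x ^ (a - 1) * Real.exp (-x) :=
    mul_nonneg (Real.rpow_nonneg hx0.le _) (Real.exp_pos _).le
  rw [Real.norm_eq_abs, Real.norm_eq_abs, abs_of_nonneg (div_nonneg hnum (by positivity)),
    abs_of_nonneg (by positivity)]
  calc x ^ (a - 1) * Real.exp (-x) / (x * u + 1) ^ i
      ≤ x ^ (a - 1) * Real.exp (-x) := div_le_self hnum hp
    _ = Real.exp (-x) * x ^ (a - 1) := by ring

lemma integrableOn_G {e : ℝ} (he : -1 < e) {u : ℝ} (hu : 0 ≤ u) :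
    IntegrableOn (fun x : ℝ => x ^ (e - 1) * Real.exp (-x) * Real.log (x * u + 1)) (Set.Ioi 0) := by
  have hint : IntegrableOn (fun x : ℝ => u * (Real.exp (-x) * x ^ (e + 1 - 1))) (Set.Ioi 0) :=
    (Real.GammaIntegral_convergent (by linarith)).const_mul u
  refine Integrable.mono hint (meas_aux1 e u) ?_
  rw [ae_restrict_iff' measurableSet_Ioi]
  refine ae_of_all _ fun x hx => ?_
  have hx0 : (0:ℝ) < x := hx
  have h1 : (1:ℝ) ≤ x * u + 1 := by nlinarith
  have hlog0 : 0 ≤ Real.log (x * u + 1) := Real.log_nonneg h1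
  have hlog : Real.log (x * u + 1) ≤ x * u := by
    have := Real.log_le_sub_one_of_pos (lt_of_lt_of_le one_pos h1)
    linarith
  have hxe : x ^ (e - 1) * x = x ^ e := by
    rw [← Real.rpow_add_one hx0.ne' (e - 1)]; ring_nf
  have hnum : 0 ≤ x ^ (e - 1) * Real.exp (-x) :=
    mul_nonneg (Real.rpow_nonneg hx0.le _) (Real.exp_pos _).le
  rw [Real.norm_eq_abs, Real.norm_eq_abs, abs_of_nonneg (by positivity)]
  have habs : |u * (Real.exp (-x) * x ^ (e + 1 - 1))| = u * (Real.exp (-x) * x ^ (e + 1 - 1)) := by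
    apply abs_of_nonneg; positivity
  rw [habs]
  calc x ^ (e - 1) * Real.exp (-x) * Real.log (x * u + 1)
      ≤ x ^ (e - 1) * Real.exp (-x) * (x * u) := mul_le_mul_of_nonneg_left hlog hnum
    _ = u * (Real.exp (-x) * (x ^ (e - 1) * x)) := by ring
    _ = u * (Real.exp (-x) * x ^ (e + 1 - 1)) := by rw [hxe]; ring_nf









lemma meas_aux4 {h : ℝ → ℝ} (hg : Measurable h) (c : ℝ) (F : ℝ → ℝ)
    (hF : ∀ x, F x = x ^ c * h x) :
    AEStronglyMeasurable F (volume.restrict (Set.Ioi 0)) := by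
  have : F = fun x => x ^ c * h x := funext hF
  rw [this]
  exact ((contOn_rpow c).aestronglyMeasurable measurableSet_Ioi).mul hg.aestronglyMeasurable

lemma ball_pos {u t : ℝ} (hu : 0 < u) (ht : t ∈ Metric.ball u (u / 2)) : 0 < t := by
  have := abs_lt.1 (mem_ball_iff_norm.1 ht)
  cases this; linarith

lemma hasDerivAt_G {e u : ℝ} (he : -1 < e) (hu : 0 < u) :
    HasDerivAt (G e) (J (e + 1) 1 u) u := by
  have hm : Measurable fun x : ℝ => Real.exp (-x) * (x / (x * u + 1)) := by
    have hm1 : Measurable (fun x : ℝ => x * u + 1) := (measurable_id.mul_const u).add_const 1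
    exact ((Real.continuous_exp.comp continuous_neg).measurable).mul (measurable_id.div hm1)
  have key := hasDerivAt_integral_of_dominated_loc_of_deriv_le
    (μ := volume.restrict (Set.Ioi 0)) (x₀ := u)
    (F := fun t x => x ^ (e - 1) * Real.exp (-x) * Real.log (x * t + 1))
    (F' := fun t x => x ^ (e - 1) * Real.exp (-x) * (x / (x * t + 1)))
    (bound := fun x => Real.exp (-x) * x ^ (e + 1 - 1))
    (Metric.ball_mem_nhds u (show (0:ℝ) < u / 2 by positivity))
    (Eventually.of_forall fun t => meas_aux1 e t)
    (integrableOn_G he hu.le)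
    (meas_aux4 hm (e - 1) _ fun x => by ring)
    ?_ (Real.GammaIntegral_convergent (by linarith : (0:ℝ) < e + 1)) ?_
  · have h2 := key.2
    have : (∫ x in Set.Ioi (0:ℝ), x ^ (e - 1) * Real.exp (-x) * (x / (x * u + 1)))
        = J (e + 1) 1 u := by
      unfold J
      refine setIntegral_congr_fun measurableSet_Ioi fun x hx => ?_
      have hx0 : (0:ℝ) < x := hx
      have hxe : x ^ (e + 1 - 1) = x ^ (e - 1) * x := by
        rw [show e + 1 - 1 = (e - 1) + 1 by ring, Real.rpow_add_one hx0.ne']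
      rw [pow_one, hxe]; ring
    rw [this] at h2
    exact h2
  · -- bound
    rw [ae_restrict_iff' measurableSet_Ioi]
    refine ae_of_all _ fun x hx => fun t ht => ?_
    have hx0 : (0:ℝ) < x := hx
    have ht0 : 0 < t := ball_pos hu ht
    have hX : (1:ℝ) ≤ x * t + 1 := by nlinarith
    have hxe : x ^ (e + 1 - 1) = x ^ (e - 1) * x := by
      rw [show e + 1 - 1 = (e - 1) + 1 by ring, Real.rpow_add_one hx0.ne']
    have hfrac : x / (x * t + 1) ≤ x := by
      calc x / (x * t + 1) ≤ x / 1 := by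
            apply div_le_div_of_nonneg_left hx0.le one_pos hX
        _ = x := div_one x
    have hnn : 0 ≤ x / (x * t + 1) := div_nonneg hx0.le (by linarith)
    rw [Real.norm_eq_abs, abs_of_nonneg (by positivity)]
    calc x ^ (e - 1) * Real.exp (-x) * (x / (x * t + 1))
        ≤ x ^ (e - 1) * Real.exp (-x) * x := by
          apply mul_le_mul_of_nonneg_left hfrac
          exact mul_nonneg (Real.rpow_nonneg hx0.le _) (Real.exp_pos _).le
      _ = Real.exp (-x) * x ^ (e + 1 - 1) := by rw [hxe]; ring
  · -- differentiability
    rw [ae_restrict_iff' measurableSet_Ioi]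
    refine ae_of_all _ fun x hx => fun t ht => ?_
    have hx0 : (0:ℝ) < x := hx
    have ht0 : 0 < t := ball_pos hu ht
    have hX : (0:ℝ) < x * t + 1 := by nlinarith
    have hl : HasDerivAt (fun t : ℝ => x * t + 1) x t := by
      simpa using ((hasDerivAt_id t).const_mul x).add_const 1
    exact (hl.log hX.ne').const_mul (x ^ (e - 1) * Real.exp (-x))

lemma hasDerivAt_J {a u : ℝ} (ha : 0 < a) (hu : 0 < u) (m : ℕ) :
    HasDerivAt (J a (m + 1)) (-((m:ℝ) + 1) * J (a + 1) (m + 2) u) u := by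
  have hm1 : Measurable (fun x : ℝ => x * u + 1) := (measurable_id.mul_const u).add_const 1
  have hm : Measurable fun x : ℝ => Real.exp (-x) * (-((m:ℝ) + 1) * x / (x * u + 1) ^ (m + 2)) :=
    ((Real.continuous_exp.comp continuous_neg).measurable).mul
      ((measurable_id.const_mul _).div (hm1.pow_const _))
  have key := hasDerivAt_integral_of_dominated_loc_of_deriv_le
    (μ := volume.restrict (Set.Ioi 0)) (x₀ := u)
    (F := fun t x => x ^ (a - 1) * Real.exp (-x) / (x * t + 1) ^ (m + 1))
    (F' := fun t x => x ^ (a - 1) * Real.exp (-x) * (-((m:ℝ) + 1) * x / (x * t + 1) ^ (m + 2)))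
    (bound := fun x => ((m:ℝ) + 1) * (Real.exp (-x) * x ^ (a + 1 - 1)))
    (Metric.ball_mem_nhds u (show (0:ℝ) < u / 2 by positivity))
    (Eventually.of_forall fun t => by
      refine meas_aux4 (h := fun x => Real.exp (-x) / (x * t + 1) ^ (m + 1)) ?_ (a - 1) _
        (fun x => by ring)
      exact ((Real.continuous_exp.comp continuous_neg).measurable).div
        (((measurable_id.mul_const t).add_const 1).pow_const _))
    (integrableOn_J ha hu.le (m + 1))
    (meas_aux4 hm (a - 1) _ fun x => by ring)
    ?_ ((Real.GammaIntegral_convergent (by linarith : (0:ℝ) < a + 1)).const_mul _) ?_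
  · have h2 := key.2
    have heq : (∫ x in Set.Ioi (0:ℝ),
        x ^ (a - 1) * Real.exp (-x) * (-((m:ℝ) + 1) * x / (x * u + 1) ^ (m + 2)))
        = -((m:ℝ) + 1) * J (a + 1) (m + 2) u := by
      unfold J
      rw [← MeasureTheory.integral_const_mul]
      refine setIntegral_congr_fun measurableSet_Ioi fun x hx => ?_
      have hx0 : (0:ℝ) < x := hx
      have hxe : x ^ (a + 1 - 1) = x ^ (a - 1) * x := by
        rw [show a + 1 - 1 = (a - 1) + 1 by ring, Real.rpow_add_one hx0.ne']
      rw [hxe]; ring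
    rw [heq] at h2
    exact h2
  · -- bound
    rw [ae_restrict_iff' measurableSet_Ioi]
    refine ae_of_all _ fun x hx => fun t ht => ?_
    have hx0 : (0:ℝ) < x := hx
    have ht0 : 0 < t := ball_pos hu ht
    have hX : (1:ℝ) ≤ (x * t + 1) := by nlinarith
    have hXp : (1:ℝ) ≤ (x * t + 1) ^ (m + 2) := one_le_pow₀ hX
    have hxe : x ^ (a + 1 - 1) = x ^ (a - 1) * x := by
      rw [show a + 1 - 1 = (a - 1) + 1 by ring, Real.rpow_add_one hx0.ne']
    have hC : 0 ≤ x ^ (a - 1) * Real.exp (-x) :=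
      mul_nonneg (Real.rpow_nonneg hx0.le _) (Real.exp_pos _).le
    rw [Real.norm_eq_abs, abs_mul, abs_of_nonneg hC, abs_div, abs_of_nonneg
      (by positivity : (0:ℝ) ≤ (x * t + 1) ^ (m + 2))]
    have habs : |(-((m:ℝ) + 1) * x)| = ((m:ℝ) + 1) * x := by
      rw [abs_mul, abs_neg, abs_of_nonneg (by positivity : (0:ℝ) ≤ (m:ℝ) + 1),
        abs_of_nonneg hx0.le]
    rw [habs]
    calc x ^ (a - 1) * Real.exp (-x) * (((m:ℝ) + 1) * x / (x * t + 1) ^ (m + 2))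
        ≤ x ^ (a - 1) * Real.exp (-x) * (((m:ℝ) + 1) * x) := by
          apply mul_le_mul_of_nonneg_left (div_le_self (by positivity) hXp) hC
      _ = ((m:ℝ) + 1) * (Real.exp (-x) * x ^ (a + 1 - 1)) := by rw [hxe]; ring
  · -- differentiability
    rw [ae_restrict_iff' measurableSet_Ioi]
    refine ae_of_all _ fun x hx => fun t ht => ?_
    have hx0 : (0:ℝ) < x := hx
    have ht0 : 0 < t := ball_pos hu ht
    have hX : (0:ℝ) < x * t + 1 := by nlinarith
    have hl : HasDerivAt (fun t : ℝ => x * t + 1) x t := by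
      simpa using ((hasDerivAt_id t).const_mul x).add_const 1
    have hpow := hl.pow (m + 1)
    have hdiv := (hasDerivAt_const t (x ^ (a - 1) * Real.exp (-x))).div hpow
      (pow_ne_zero _ hX.ne')
    refine hdiv.congr_deriv ?_
    have h2 : (x * t + 1) ^ (m + 1 - 1) = (x * t + 1) ^ m := by norm_num
    rw [h2]
    simp only [Pi.pow_apply]
    push_cast
    field_simp
    ring







lemma ibpA {e u : ℝ} (he : -1 < e) (hu : 0 < u) :
    G (e + 1) u = e * G e u + u * J (e + 1) 1 u := by
  set F : ℝ → ℝ := fun x => x ^ e * Real.exp (-x) * Real.log (x * u + 1) with hF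
  set F' : ℝ → ℝ := fun x =>
    e * (x ^ (e - 1) * Real.exp (-x) * Real.log (x * u + 1))
      - x ^ (e + 1 - 1) * Real.exp (-x) * Real.log (x * u + 1)
      + u * (x ^ (e + 1 - 1) * Real.exp (-x) / (x * u + 1) ^ 1) with hF'
  have h1 : IntegrableOn (fun x : ℝ => x ^ (e - 1) * Real.exp (-x) * Real.log (x * u + 1))
    (Set.Ioi 0) := integrableOn_G he hu.le
  have h2 : IntegrableOn (fun x : ℝ => x ^ (e + 1 - 1) * Real.exp (-x) * Real.log (x * u + 1))
    (Set.Ioi 0) := integrableOn_G (by linarith) hu.le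
  have h3 : IntegrableOn (fun x : ℝ => x ^ (e + 1 - 1) * Real.exp (-x) / (x * u + 1) ^ 1)
    (Set.Ioi 0) := integrableOn_J (by linarith) hu.le 1
  have hFint : IntegrableOn F' (Set.Ioi 0) :=
    ((h1.const_mul e).sub h2).add (h3.const_mul u)
  -- continuity at 0 within Ici 0
  have hF0 : F 0 = 0 := by simp [hF]
  have hcont : ContinuousWithinAt F (Set.Ici 0) 0 := by
    rw [← Set.Ioi_insert, continuousWithinAt_insert_self]
    unfold ContinuousWithinAt
    rw [hF0]
    have heq : ∀ᶠ x in 𝓝[>] (0:ℝ), x ^ (e + 1) * Real.exp (-x) * (Real.log (x * u + 1) / x)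
        = F x := by
      filter_upwards [self_mem_nhdsWithin] with x hx
      have hx0 : (0:ℝ) < x := hx
      have : x ^ (e + 1) = x ^ e * x := by
        rw [Real.rpow_add_one hx0.ne']
      rw [hF, this]
      field_simp
    rw [← tendsto_congr' heq]
    have T1 : Tendsto (fun x : ℝ => x ^ (e + 1)) (𝓝[>] 0) (𝓝 0) := by
      have := (Real.continuousAt_rpow_const 0 (e + 1) (Or.inr (by linarith))).tendsto
      rw [Real.zero_rpow (by linarith : e + 1 ≠ 0)] at this
      exact this.mono_left nhdsWithin_le_nhds
    have T2 : Tendsto (fun x : ℝ => Real.exp (-x)) (𝓝[>] 0) (𝓝 1) := by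
      have : Tendsto (fun x : ℝ => Real.exp (-x)) (𝓝 0) (𝓝 (Real.exp (-0))) :=
        (Real.continuous_exp.comp continuous_neg).continuousAt
      simpa using this.mono_left nhdsWithin_le_nhds
    have T3 : Tendsto (fun x : ℝ => Real.log (x * u + 1) / x) (𝓝[>] 0) (𝓝 u) := by
      have hd : HasDerivAt (fun x : ℝ => Real.log (x * u + 1)) u 0 := by
        have hl : HasDerivAt (fun x : ℝ => x * u + 1) u 0 := by
          simpa using ((hasDerivAt_id (0:ℝ)).mul_const u).add_const 1
        have := hl.log (by norm_num : (0:ℝ) * u + 1 ≠ 0)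
        simpa using this
      have := hasDerivAt_iff_tendsto_slope.1 hd
      have h2 : Tendsto (slope (fun x : ℝ => Real.log (x * u + 1)) 0) (𝓝[>] 0) (𝓝 u) :=
        this.mono_left (nhdsWithin_mono 0 fun x hx => ne_of_gt hx)
      refine h2.congr' ?_
      filter_upwards [self_mem_nhdsWithin] with x hx
      simp [slope, (show (0:ℝ) < x from hx).ne']
      ring
    have := (T1.mul T2).mul T3
    simpa using this
  -- derivative on Ioi 0
  have hderiv : ∀ x ∈ Set.Ioi (0:ℝ), HasDerivAt F (F' x) x := by
    intro x hx
    have hx0 : (0:ℝ) < x := hx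
    have hX : (0:ℝ) < x * u + 1 := by nlinarith
    have hrpow : HasDerivAt (fun x : ℝ => x ^ e) (e * x ^ (e - 1)) x :=
      Real.hasDerivAt_rpow_const (Or.inl hx0.ne')
    have hexp : HasDerivAt (fun x : ℝ => Real.exp (-x)) (Real.exp (-x) * (-1)) x :=
      ((hasDerivAt_id x).neg).exp
    have hlog : HasDerivAt (fun x : ℝ => Real.log (x * u + 1)) (u / (x * u + 1)) x := by
      have hl : HasDerivAt (fun x : ℝ => x * u + 1) u x := by
        simpa using ((hasDerivAt_id x).mul_const u).add_const 1
      simpa using hl.log hX.ne'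
    have := (hrpow.mul hexp).mul hlog
    refine this.congr_deriv ?_
    have he1 : x ^ (e + 1 - 1) = x ^ (e - 1) * x := by
      rw [← Real.rpow_add_one hx0.ne' (e - 1)]
      ring_nf
    have he2 : x ^ e = x ^ (e - 1) * x := by
      rw [← Real.rpow_add_one hx0.ne' (e - 1)]
      ring_nf
    simp only [hF', he1, he2, pow_one, Pi.mul_apply]
    field_simp
    ring
  -- limit at infinity
  have htop : Tendsto F atTop (𝓝 0) := by
    have hg : Tendsto (fun x : ℝ => u * (x ^ (e + 1) * Real.exp (-(1:ℝ) * x))) atTop (𝓝 0) := by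
      have := (tendsto_rpow_mul_exp_neg_mul_atTop_nhds_zero (e + 1) 1 one_pos).const_mul u
      simpa using this
    refine squeeze_zero' ?_ ?_ hg
    · filter_upwards [eventually_gt_atTop (0:ℝ)] with x hx
      have hX : (1:ℝ) ≤ x * u + 1 := by nlinarith
      have := Real.log_nonneg hX
      have := Real.rpow_nonneg hx.le e
      positivity
    · filter_upwards [eventually_gt_atTop (0:ℝ)] with x hx
      have hX : (1:ℝ) ≤ x * u + 1 := by nlinarith
      have hlog : Real.log (x * u + 1) ≤ x * u := by
        have := Real.log_le_sub_one_of_pos (lt_of_lt_of_le one_pos hX)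
        linarith
      have he2 : x ^ (e + 1) = x ^ e * x := by rw [Real.rpow_add_one hx.ne']
      calc F x ≤ x ^ e * Real.exp (-x) * (x * u) := by
            apply mul_le_mul_of_nonneg_left hlog
            exact mul_nonneg (Real.rpow_nonneg hx.le _) (Real.exp_pos _).le
        _ = u * (x ^ (e + 1) * Real.exp (-(1:ℝ) * x)) := by rw [he2]; ring_nf
  have key := integral_Ioi_of_hasDerivAt_of_tendsto hcont hderiv hFint htop
  rw [hF0, sub_zero] at key
  -- split the integral
  have hsplit : ∫ x in Set.Ioi (0:ℝ), F' x
      = e * G e u - G (e + 1) u + u * J (e + 1) 1 u := by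
    have hc1 : IntegrableOn (fun x : ℝ =>
        e * (x ^ (e - 1) * Real.exp (-x) * Real.log (x * u + 1))) (Set.Ioi 0) :=
      h1.const_mul e
    have hc3 : IntegrableOn (fun x : ℝ =>
        u * (x ^ (e + 1 - 1) * Real.exp (-x) / (x * u + 1) ^ 1)) (Set.Ioi 0) :=
      h3.const_mul u
    have hsub : IntegrableOn (fun x : ℝ =>
        e * (x ^ (e - 1) * Real.exp (-x) * Real.log (x * u + 1))
          - x ^ (e + 1 - 1) * Real.exp (-x) * Real.log (x * u + 1)) (Set.Ioi 0) := hc1.sub h2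
    rw [hF']
    rw [MeasureTheory.integral_add hsub hc3, MeasureTheory.integral_sub hc1 h2,
      MeasureTheory.integral_const_mul, MeasureTheory.integral_const_mul]
    rfl
  rw [key] at hsplit
  linarith




lemma rbinom_zero (x : ℝ) : rbinom x 0 = 1 := by simp [rbinom]

lemma fact_ne (n : ℕ) : ((Nat.factorial n : ℝ)) ≠ 0 := by
  exact_mod_cast Nat.factorial_ne_zero n

lemma rbinom_succ (x : ℝ) (n : ℕ) :
    rbinom x (n + 1) * (n + 1) = rbinom x n * (x - n) := by
  unfold rbinom
  rw [Finset.prod_range_succ]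
  have h1 : ((Nat.factorial (n+1) : ℕ) : ℝ) = ((n:ℝ) + 1) * (Nat.factorial n : ℝ) := by
    rw [Nat.factorial_succ]; push_cast; ring
  rw [h1]
  field_simp

lemma rbinom_pascal (x : ℝ) (n : ℕ) :
    rbinom (x + 1) (n + 1) = rbinom x (n + 1) + rbinom x n := by
  unfold rbinom
  rw [Finset.prod_range_succ' (fun m : ℕ => x + 1 - m), Finset.prod_range_succ]
  have hc : ∀ m ∈ Finset.range n, (x + 1 - (↑(m + 1) : ℝ)) = x - m := by
    intro m _; push_cast; ring
  rw [Finset.prod_congr rfl hc]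
  have h1 : ((Nat.factorial (n+1) : ℕ) : ℝ) = ((n:ℝ) + 1) * (Nat.factorial n : ℝ) := by
    rw [Nat.factorial_succ]; push_cast; ring
  rw [h1]
  field_simp
  ring

lemma rbinom_mul_sub (x : ℝ) (n : ℕ) :
    rbinom x n * (x - n) = x * rbinom (x - 1) n := by
  unfold rbinom
  have key : (∏ m ∈ Finset.range n, (x - m)) * (x - n)
      = x * ∏ m ∈ Finset.range n, (x - 1 - m) := by
    rw [← Finset.prod_range_succ (fun m : ℕ => x - m) n,
      Finset.prod_range_succ' (fun m : ℕ => x - m)]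
    have hc : ∀ m ∈ Finset.range n, (x - (↑(m + 1) : ℝ)) = x - 1 - m := by
      intro m _; push_cast; ring
    rw [Finset.prod_congr rfl hc]
    push_cast
    ring
  field_simp
  linear_combination key

lemma rbinom_key (e : ℝ) (n i : ℕ) :
    (e + i + 1) * rbinom (e - 1) n + ((i : ℝ) + 1) * rbinom (e - 1) (n + 1)
      = ((n : ℝ) + i + 2) * rbinom e (n + 1) := by
  have hp := rbinom_pascal (e - 1) n
  rw [show e - 1 + 1 = e by ring] at hp
  have hs := rbinom_succ (e - 1) n
  linear_combination (-((n : ℝ) + i + 2)) * hp - hs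

lemma rbinom_edge (e : ℝ) (k : ℕ) :
    e * rbinom (e - 1) k = ((k : ℝ) + 1) * rbinom e (k + 1) := by
  have h1 := rbinom_succ e k
  have h2 := rbinom_mul_sub e k
  linear_combination -h1 - h2

lemma rbinom_absorb (x : ℝ) (n : ℕ) :
    rbinom (x + 1) (n + 1) * ((n : ℝ) + 1) = (x + 1) * rbinom x n := by
  have h1 := rbinom_succ (x + 1) n
  have h2 := rbinom_mul_sub (x + 1) n
  rw [show x + 1 - 1 = x by ring] at h2
  linear_combination h1 + h2

lemma rbinom_pos {x : ℝ} {n : ℕ} (h : ∀ m : ℕ, m < n → 0 < x - m) : 0 < rbinom x n := by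
  unfold rbinom
  apply div_pos
  · exact Finset.prod_pos fun m hm => h m (Finset.mem_range.1 hm)
  · exact_mod_cast Nat.factorial_pos n











lemma f_eq (e u : ℝ) : f e u = (1 / Real.Gamma (e + 1)) * G e u := rfl

lemma Gamma_pos' {e : ℝ} (he : -1 < e) : 0 < Real.Gamma (e + 1) :=
  Real.Gamma_pos_of_pos (by linarith)

lemma hasDerivAt_f {e u : ℝ} (he : -1 < e) (hu : 0 < u) :
    HasDerivAt (f e) ((1 / Real.Gamma (e + 1)) * J (e + 1) 1 u) u := by
  have h := (hasDerivAt_G he hu).const_mul (1 / Real.Gamma (e + 1))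
  exact h

lemma f_rec {e u : ℝ} (he : -1 < e) (hu : 0 < u) :
    f (e + 1) u = (e * f e u + u * deriv (f e) u) / (e + 1) := by
  have hg : Real.Gamma (e + 1) ≠ 0 := (Gamma_pos' he).ne'
  have he1 : (e + 1) ≠ 0 := by linarith
  have hGam : Real.Gamma (e + 1 + 1) = (e + 1) * Real.Gamma (e + 1) :=
    Real.Gamma_add_one he1
  have hA := ibpA he hu
  rw [(hasDerivAt_f he hu).deriv]
  have h2 : f (e + 1) u = (1 / Real.Gamma (e + 1 + 1)) * G (e + 1) u := rfl
  rw [h2, hGam, hA, f_eq]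
  rw [eq_div_iff he1]
  field_simp

lemma iter_deriv {ε : ℝ} (hε : -1 < ε) : ∀ (i : ℕ) (u : ℝ), 0 < u →
    iteratedDeriv (i + 1) (f ε) u
      = ((-1:ℝ) ^ i * (Nat.factorial i : ℝ) / Real.Gamma (ε + 1)) * J (ε + i + 1) (i + 1) u := by
  intro i
  induction i with
  | zero =>
    intro u hu
    rw [iteratedDeriv_one, (hasDerivAt_f hε hu).deriv]
    norm_num
  | succ m ih =>
    intro u hu
    have ha : (0:ℝ) < ε + m + 1 := by
      have : (0:ℝ) ≤ m := Nat.cast_nonneg m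
      linarith
    rw [iteratedDeriv_succ]
    have hev : iteratedDeriv (m + 1) (f ε)
        =ᶠ[𝓝 u] fun v => ((-1:ℝ) ^ m * (Nat.factorial m : ℝ) / Real.Gamma (ε + 1))
          * J (ε + m + 1) (m + 1) v := by
      filter_upwards [isOpen_Ioi.mem_nhds hu] with v hv using ih v hv
    rw [hev.deriv_eq]
    have hd := (hasDerivAt_J ha hu m).const_mul
      ((-1:ℝ) ^ m * (Nat.factorial m : ℝ) / Real.Gamma (ε + 1))
    rw [hd.deriv]
    rw [show (ε + ((m:ℕ)+1 : ℕ) + 1 : ℝ) = ε + m + 1 + 1 by push_cast; ring]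
    rw [Nat.factorial_succ]
    push_cast
    ring

lemma hasDerivAt_iter {ε : ℝ} (hε : -1 < ε) (i : ℕ) {u : ℝ} (hu : 0 < u) :
    HasDerivAt (iteratedDeriv i (f ε)) (iteratedDeriv (i + 1) (f ε) u) u := by
  cases i with
  | zero =>
    simp only [iteratedDeriv_zero, Nat.zero_add, iteratedDeriv_one]
    have h := hasDerivAt_f hε hu
    rw [h.deriv]
    exact h
  | succ m =>
    have ha : (0:ℝ) < ε + m + 1 := by
      have : (0:ℝ) ≤ m := Nat.cast_nonneg m
      linarith
    have hev : (fun v => ((-1:ℝ) ^ m * (Nat.factorial m : ℝ) / Real.Gamma (ε + 1))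
          * J (ε + m + 1) (m + 1) v) =ᶠ[𝓝 u] iteratedDeriv (m + 1) (f ε) := by
      filter_upwards [isOpen_Ioi.mem_nhds hu] with v hv using (iter_deriv hε m v hv).symm
    have hd := (hasDerivAt_J ha hu m).const_mul
      ((-1:ℝ) ^ m * (Nat.factorial m : ℝ) / Real.Gamma (ε + 1))
    have h2 := hd.congr_of_eventuallyEq hev.symm
    have h3 : iteratedDeriv (m + 1 + 1) (f ε) u
        = ((-1:ℝ) ^ m * (Nat.factorial m : ℝ) / Real.Gamma (ε + 1))
          * (-((m:ℝ) + 1) * J (ε + m + 1 + 1) (m + 2) u) := by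
      rw [iter_deriv hε (m + 1) u hu]
      rw [show (ε + ((m:ℕ)+1 : ℕ) + 1 : ℝ) = ε + m + 1 + 1 by push_cast; ring]
      rw [Nat.factorial_succ]
      push_cast
      ring
    rw [h3]
    exact h2

lemma main_ind {ε : ℝ} (hε : -1 < ε) : ∀ (k : ℕ) (u : ℝ), 0 < u →
    f (ε + k) u = (rbinom (ε + k) k)⁻¹ *
      ∑ i ∈ Finset.range (k + 1),
        rbinom (ε + k - 1) (k - i) * (u ^ i / (Nat.factorial i : ℝ)) *
          iteratedDeriv i (f ε) u := by
  intro k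
  induction k with
  | zero =>
    intro u hu
    simp [rbinom_zero, iteratedDeriv_zero]
  | succ k ih =>
    intro u hu
    set e : ℝ := ε + k with he_def
    have hknn : (0:ℝ) ≤ k := Nat.cast_nonneg k
    have he : -1 < e := by rw [he_def]; linarith
    have he1 : (0:ℝ) < e + 1 := by linarith
    have hb : 0 < rbinom e k := by
      apply rbinom_pos
      intro m hm
      have hm' : (m:ℝ) + 1 ≤ k := by exact_mod_cast Nat.succ_le_of_lt hm
      rw [he_def]; linarith
    have hB : 0 < rbinom (e + 1) (k + 1) := by
      apply rbinom_pos
      intro m hm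
      have hm' : (m:ℝ) ≤ k := by exact_mod_cast Nat.lt_succ_iff.1 hm
      rw [he_def]; linarith
    rw [show (ε + ((k+1 : ℕ) : ℝ)) = e + 1 by rw [he_def]; push_cast; ring]
    rw [show e + 1 - 1 = e by ring]
    rw [f_rec he hu]
    -- derivative of the sum representation
    have hds : ∀ i ∈ Finset.range (k+1), HasDerivAt
        (fun v : ℝ => rbinom (e-1) (k-i) * (v^i / (Nat.factorial i : ℝ)) *
          iteratedDeriv i (f ε) v)
        (rbinom (e-1) (k-i) * ((i:ℝ) * u^(i-1) / (Nat.factorial i : ℝ)) *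
            iteratedDeriv i (f ε) u
          + rbinom (e-1) (k-i) * (u^i / (Nat.factorial i : ℝ)) *
            iteratedDeriv (i+1) (f ε) u) u := by
      intro i _
      have h1 : HasDerivAt (fun v : ℝ => rbinom (e-1) (k-i) * (v^i / (Nat.factorial i : ℝ)))
          (rbinom (e-1) (k-i) * ((i:ℝ) * u^(i-1) / (Nat.factorial i : ℝ))) u :=
        ((hasDerivAt_pow i u).div_const (Nat.factorial i : ℝ)).const_mul _
      exact h1.mul (hasDerivAt_iter hε i hu)
    have hsum := HasDerivAt.sum hds
    have hder := hsum.const_mul (rbinom e k)⁻¹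
    have hev : f e =ᶠ[𝓝 u] fun v => (rbinom e k)⁻¹ *
        ∑ i ∈ Finset.range (k+1), rbinom (e-1) (k-i) * (v^i / (Nat.factorial i : ℝ)) *
          iteratedDeriv i (f ε) v := by
      filter_upwards [isOpen_Ioi.mem_nhds hu] with v hv using ih v hv
    have hderiv_f : deriv (f e) u = (rbinom e k)⁻¹ *
        ∑ i ∈ Finset.range (k+1),
          (rbinom (e-1) (k-i) * ((i:ℝ) * u^(i-1) / (Nat.factorial i : ℝ)) *
              iteratedDeriv i (f ε) u
            + rbinom (e-1) (k-i) * (u^i / (Nat.factorial i : ℝ)) *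
              iteratedDeriv (i+1) (f ε) u) := by
      rw [hev.deriv_eq]
      have hd2 := hder.deriv
      simp only [Finset.sum_apply] at hd2
      exact hd2
    rw [hderiv_f, ih u hu]
    -- now pure algebra with sums
    set S : ℝ := ∑ i ∈ Finset.range (k+1),
      rbinom (e-1) (k-i) * (u^i / (Nat.factorial i : ℝ)) * iteratedDeriv i (f ε) u with hS_def
    have hDsplit : (∑ i ∈ Finset.range (k+1),
        (rbinom (e-1) (k-i) * ((i:ℝ) * u^(i-1) / (Nat.factorial i : ℝ)) *
            iteratedDeriv i (f ε) u
          + rbinom (e-1) (k-i) * (u^i / (Nat.factorial i : ℝ)) *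
            iteratedDeriv (i+1) (f ε) u))
        = (∑ i ∈ Finset.range (k+1),
            rbinom (e-1) (k-i) * ((i:ℝ) * u^(i-1) / (Nat.factorial i : ℝ)) *
              iteratedDeriv i (f ε) u)
          + ∑ i ∈ Finset.range (k+1),
              rbinom (e-1) (k-i) * (u^i / (Nat.factorial i : ℝ)) *
                iteratedDeriv (i+1) (f ε) u :=
      Finset.sum_add_distrib
    have hT1 : u * ∑ i ∈ Finset.range (k+1),
        rbinom (e-1) (k-i) * ((i:ℝ) * u^(i-1) / (Nat.factorial i : ℝ)) *
          iteratedDeriv i (f ε) u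
        = ∑ i ∈ Finset.range (k+1), (i:ℝ) *
            (rbinom (e-1) (k-i) * (u^i / (Nat.factorial i : ℝ)) * iteratedDeriv i (f ε) u) := by
      rw [Finset.mul_sum]
      refine Finset.sum_congr rfl fun i _ => ?_
      cases i with
      | zero => simp
      | succ n =>
        rw [Nat.succ_sub_one, pow_succ]
        push_cast
        ring
    have hT2 : u * ∑ i ∈ Finset.range (k+1),
        rbinom (e-1) (k-i) * (u^i / (Nat.factorial i : ℝ)) * iteratedDeriv (i+1) (f ε) u
        = ∑ i ∈ Finset.range (k+1),
            rbinom (e-1) (k-i) * (u^(i+1) / (Nat.factorial i : ℝ)) *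
              iteratedDeriv (i+1) (f ε) u := by
      rw [Finset.mul_sum]
      refine Finset.sum_congr rfl fun i _ => ?_
      rw [pow_succ]
      ring
    -- the star identity
    have star : (∑ i ∈ Finset.range (k+1), (e + (i:ℝ)) *
          (rbinom (e-1) (k-i) * (u^i / (Nat.factorial i : ℝ)) * iteratedDeriv i (f ε) u))
        + (∑ i ∈ Finset.range (k+1),
            rbinom (e-1) (k-i) * (u^(i+1) / (Nat.factorial i : ℝ)) *
              iteratedDeriv (i+1) (f ε) u)
        = ((k:ℝ)+1) * ∑ i ∈ Finset.range (k+2),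
            rbinom e (k+1-i) * (u^i / (Nat.factorial i : ℝ)) * iteratedDeriv i (f ε) u := by
      rw [Finset.sum_range_succ' (fun i => (e + (i:ℝ)) *
        (rbinom (e-1) (k-i) * (u^i / (Nat.factorial i : ℝ)) * iteratedDeriv i (f ε) u)) k]
      rw [Finset.sum_range_succ (fun i =>
        rbinom (e-1) (k-i) * (u^(i+1) / (Nat.factorial i : ℝ)) *
          iteratedDeriv (i+1) (f ε) u) k]
      rw [Finset.sum_range_succ' (fun i =>
        rbinom e (k+1-i) * (u^i / (Nat.factorial i : ℝ)) * iteratedDeriv i (f ε) u) (k+1)]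
      rw [Finset.sum_range_succ (fun i =>
        rbinom e (k+1-(i+1)) * (u^(i+1) / (Nat.factorial (i+1) : ℝ)) *
          iteratedDeriv (i+1) (f ε) u) k]
      have hterm : ∀ i ∈ Finset.range k,
          (e + ((i:ℕ)+1 : ℕ)) * (rbinom (e-1) (k-(i+1)) * (u^(i+1) / (Nat.factorial (i+1) : ℝ)) *
              iteratedDeriv (i+1) (f ε) u)
            + rbinom (e-1) (k-i) * (u^(i+1) / (Nat.factorial i : ℝ)) *
                iteratedDeriv (i+1) (f ε) u
          = ((k:ℝ)+1) * (rbinom e (k+1-(i+1)) * (u^(i+1) / (Nat.factorial (i+1) : ℝ)) *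
              iteratedDeriv (i+1) (f ε) u) := by
        intro i hi
        have hik : i < k := Finset.mem_range.1 hi
        have h1 : k - i = (k - (i+1)) + 1 := by omega
        have h2 : k + 1 - (i+1) = (k - (i+1)) + 1 := by omega
        have h3 : (k:ℝ) = ((k - (i+1) : ℕ) : ℝ) + i + 1 := by
          have : k = (k - (i+1)) + i + 1 := by omega
          exact_mod_cast this
        have hfac : ((Nat.factorial (i+1) : ℕ) : ℝ) = ((i:ℝ)+1) * (Nat.factorial i : ℝ) := by
          rw [Nat.factorial_succ]; push_cast; ring
        have hfne : (Nat.factorial i : ℝ) ≠ 0 := by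
          exact_mod_cast Nat.factorial_ne_zero i
        have hine : ((i:ℝ) + 1) ≠ 0 := by positivity
        have hkey := rbinom_key e (k - (i+1)) i
        rw [show ((k - (i+1) : ℕ) : ℝ) + i + 2 = (k:ℝ) + 1 by rw [h3]; ring] at hkey
        have hdiv : u^(i+1) / (Nat.factorial i : ℝ)
            = ((i:ℝ)+1) * (u^(i+1) / ((Nat.factorial (i+1) : ℕ) : ℝ)) := by
          rw [hfac]; field_simp
        rw [h1, h2, hdiv, show ((i+1:ℕ):ℝ) = (i:ℝ)+1 by push_cast; ring]
        linear_combination (u ^ (i + 1) / ((Nat.factorial (i+1) : ℕ) : ℝ)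
          * iteratedDeriv (i + 1) (f ε) u) * hkey
      have hmerge : (∑ i ∈ Finset.range k, (e + ((i:ℕ)+1 : ℕ)) *
            (rbinom (e-1) (k-(i+1)) * (u^(i+1) / (Nat.factorial (i+1) : ℝ)) *
              iteratedDeriv (i+1) (f ε) u))
          + ∑ i ∈ Finset.range k,
              rbinom (e-1) (k-i) * (u^(i+1) / (Nat.factorial i : ℝ)) *
                iteratedDeriv (i+1) (f ε) u
          = ((k:ℝ)+1) * ∑ i ∈ Finset.range k,
              rbinom e (k+1-(i+1)) * (u^(i+1) / (Nat.factorial (i+1) : ℝ)) *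
                iteratedDeriv (i+1) (f ε) u := by
        rw [← Finset.sum_add_distrib, Finset.mul_sum]
        exact Finset.sum_congr rfl hterm
      have edge0 : (e + ((0:ℕ):ℝ)) * (rbinom (e-1) (k-0) * (u^0 / (Nat.factorial 0 : ℝ)) *
            iteratedDeriv 0 (f ε) u)
          = ((k:ℝ)+1) * (rbinom e (k+1-0) * (u^0 / (Nat.factorial 0 : ℝ)) *
            iteratedDeriv 0 (f ε) u) := by
        simp only [Nat.cast_zero, add_zero, Nat.sub_zero, pow_zero, Nat.factorial_zero,
          Nat.cast_one]
        have := rbinom_edge e k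
        linear_combination (iteratedDeriv 0 (f ε) u / 1 * 1) * this
      have edgeTop : rbinom (e-1) (k-k) * (u^(k+1) / (Nat.factorial k : ℝ)) *
            iteratedDeriv (k+1) (f ε) u
          = ((k:ℝ)+1) * (rbinom e (k+1-(k+1)) * (u^(k+1) / (Nat.factorial (k+1) : ℝ)) *
            iteratedDeriv (k+1) (f ε) u) := by
        rw [Nat.sub_self, Nat.sub_self, rbinom_zero, rbinom_zero]
        have hfac : ((Nat.factorial (k+1) : ℕ) : ℝ) = ((k:ℝ)+1) * (Nat.factorial k : ℝ) := by
          rw [Nat.factorial_succ]; push_cast; ring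
        rw [hfac]
        have hfne : (Nat.factorial k : ℝ) ≠ 0 := by
          exact_mod_cast Nat.factorial_ne_zero k
        have hkne : ((k:ℝ) + 1) ≠ 0 := by positivity
        field_simp
      linear_combination hmerge + edge0 + edgeTop
    -- combine e*S with the i-weighted sum
    have hcomb : e * S + (∑ i ∈ Finset.range (k+1), (i:ℝ) *
          (rbinom (e-1) (k-i) * (u^i / (Nat.factorial i : ℝ)) * iteratedDeriv i (f ε) u))
        = ∑ i ∈ Finset.range (k+1), (e + (i:ℝ)) *
            (rbinom (e-1) (k-i) * (u^i / (Nat.factorial i : ℝ)) * iteratedDeriv i (f ε) u) := by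
      rw [hS_def, Finset.mul_sum, ← Finset.sum_add_distrib]
      exact Finset.sum_congr rfl fun i _ => by ring
    -- final assembly
    have hnum : e * S + u * (∑ i ∈ Finset.range (k+1),
        (rbinom (e-1) (k-i) * ((i:ℝ) * u^(i-1) / (Nat.factorial i : ℝ)) *
            iteratedDeriv i (f ε) u
          + rbinom (e-1) (k-i) * (u^i / (Nat.factorial i : ℝ)) *
            iteratedDeriv (i+1) (f ε) u))
        = ((k:ℝ)+1) * ∑ i ∈ Finset.range (k+2),
            rbinom e (k+1-i) * (u^i / (Nat.factorial i : ℝ)) * iteratedDeriv i (f ε) u := by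
      rw [hDsplit, mul_add, hT1, hT2]
      linear_combination hcomb + star
    have habs := rbinom_absorb e k
    rw [div_eq_iff he1.ne']
    have hexpand : e * ((rbinom e k)⁻¹ * S) + u * ((rbinom e k)⁻¹ *
        (∑ i ∈ Finset.range (k+1),
          (rbinom (e-1) (k-i) * ((i:ℝ) * u^(i-1) / (Nat.factorial i : ℝ)) *
              iteratedDeriv i (f ε) u
            + rbinom (e-1) (k-i) * (u^i / (Nat.factorial i : ℝ)) *
              iteratedDeriv (i+1) (f ε) u)))
        = (rbinom e k)⁻¹ * (((k:ℝ)+1) * ∑ i ∈ Finset.range (k+2),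
            rbinom e (k+1-i) * (u^i / (Nat.factorial i : ℝ)) * iteratedDeriv i (f ε) u) := by
      rw [← hnum]; ring
    rw [hexpand]
    rw [inv_mul_eq_div, inv_mul_eq_div, div_mul_eq_mul_div, div_eq_div_iff hb.ne' hB.ne']
    linear_combination (∑ i ∈ Finset.range (k+2),
      rbinom e (k+1-i) * (u^i / (Nat.factorial i : ℝ)) * iteratedDeriv i (f ε) u) * habs


theorem stmt18 (u : ℝ) (hu : 0 ≤ u) (ε : ℝ) (hε : ε ∈ Set.Ioo (-1 : ℝ) (-1/2))
    (j : ℕ) (hj : 1 ≤ j) :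
    f (ε + j) u =
      (rbinom (ε + j) j)⁻¹ *
        ∑ i ∈ Finset.range (j + 1),
          rbinom (ε + j - 1) (j - i) * (u ^ i / (Nat.factorial i : ℝ)) *
            iteratedDeriv i (f ε) u := by
  rcases eq_or_lt_of_le hu with h0 | hpos
  · subst h0
    have hf0 : ∀ e : ℝ, f e 0 = 0 := by
      intro e
      unfold f
      have hz : (∫ x in Set.Ioi (0:ℝ), x ^ (e - 1) * Real.exp (-x) * Real.log (x * 0 + 1)) = 0 := by
        simp
      rw [hz, mul_zero]
    rw [hf0]
    have hzs : ∑ i ∈ Finset.range (j + 1),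
        rbinom (ε + j - 1) (j - i) * ((0:ℝ) ^ i / (Nat.factorial i : ℝ)) *
          iteratedDeriv i (f ε) 0 = 0 := by
      refine Finset.sum_eq_zero fun i _ => ?_
      cases i with
      | zero => simp [iteratedDeriv_zero, hf0]
      | succ n => simp
    rw [hzs, mul_zero]
  · exact main_ind hε.1 j u hpos
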